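/- arXiv:2407.08589 — 4 statements merged into one kernel-verified Lean document; each statement's English description precedes it below -/
import Mathlib

section
/- Let q be a prime power, d ≥ 2 and 1 ≤ k < d integers, and let E = F_q^d ∖ (F_q^k × {0}^{d−k}), i.e. the complement in F_q^d of the coordinate subspace consisting of vectors whose last d−k coordinates vanish. Then for every real p ∈ [1,∞) the exact identity ‖Ê‖_p^p = q^{−d} · (q^{d−k} − 1) · q^{(k−d)p} holds, and moreover ‖Ê‖_∞ = q^{k−d}. (Consequently E is (p,s)-Salem exactly when s ≤ 1 − k/d + k/(pd).) -/
open Finset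

/-- The Fourier transform of (the indicator of) a set `E ⊆ F_q^d`:
`Ê(x) = q^{-d} ∑_{y ∈ E} χ(-x·y)`. -/
noncomputable def fourierTransform {F : Type} [Field F] [Fintype F] [DecidableEq F] {d : ℕ}
    (χ : AddChar F ℂ) (E : Finset (Fin d → F)) (x : Fin d → F) : ℂ :=
  ((Fintype.card F : ℂ) ^ d)⁻¹ * ∑ y ∈ E, χ (-(∑ i, x i * y i))

/-- `‖Ê‖_p = ( q^{-d} ∑_{x ≠ 0} |Ê(x)|^p )^{1/p}`. -/
noncomputable def lpNorm {F : Type} [Field F] [Fintype F] [DecidableEq F] {d : ℕ}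
    (χ : AddChar F ℂ) (E : Finset (Fin d → F)) (p : ℝ) : ℝ :=
  (((Fintype.card F : ℝ) ^ d)⁻¹ *
      ∑ x ∈ Finset.univ.filter (fun x : Fin d → F => x ≠ 0),
        ‖fourierTransform χ E x‖ ^ p) ^ (1 / p)


/-- `‖Ê‖_∞ = max_{x ≠ 0} |Ê(x)|` (as a supremum over the nonzero frequencies). -/
noncomputable def linfNorm {F : Type} [Field F] [Fintype F] [DecidableEq F] {d : ℕ}
    (χ : AddChar F ℂ) (E : Finset (Fin d → F)) : ℝ :=
  sSup {r : ℝ | ∃ x : Fin d → F, x ≠ 0 ∧ r = ‖fourierTransform χ E x‖}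

section Aux

variable {F : Type} [Field F] [Fintype F] [DecidableEq F] {d k : ℕ}

set_option linter.unusedSectionVars false

lemma my_map_sum {ι : Type} (χ : AddChar F ℂ) (s : Finset ι) (f : ι → F) :
    χ (∑ i ∈ s, f i) = ∏ i ∈ s, χ (f i) := by
  induction s using Finset.cons_induction with
  | empty => simp
  | cons a s ha ih => rw [Finset.sum_cons, Finset.prod_cons, AddChar.map_add_eq_mul, ih]

lemma sum_char_pi (χ : AddChar F ℂ) (t : Fin d → Finset F) (x : Fin d → F) :
    ∑ y ∈ Fintype.piFinset t, χ (-(∑ i, x i * y i)) =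
      ∏ i, ∑ s ∈ t i, χ (-(x i * s)) := by
  rw [Finset.prod_univ_sum]
  refine Finset.sum_congr rfl fun y _ => ?_
  rw [← my_map_sum]
  congr 1
  rw [← Finset.sum_neg_distrib]

lemma single_sum (χ : AddChar F ℂ) (hχ : χ ≠ 1) (c : F) :
    ∑ t : F, χ (-(c * t)) = if c = 0 then (Fintype.card F : ℂ) else 0 := by
  have hprim := AddChar.IsPrimitive.of_ne_one hχ
  have : ∀ t : F, χ (-(c * t)) = χ (t * (-c)) := by intro t; ring_nf
  simp_rw [this]
  rw [AddChar.sum_mulShift _ hprim]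
  simp [neg_eq_zero]

lemma S_eq :
    (Finset.univ.filter fun x : Fin d → F => ∀ i : Fin d, k ≤ (i : ℕ) → x i = 0) =
      Fintype.piFinset (fun i : Fin d => if k ≤ (i : ℕ) then ({0} : Finset F) else univ) := by
  ext y
  simp only [Finset.mem_filter, Finset.mem_univ, true_and, Fintype.mem_piFinset]
  apply forall_congr'
  intro i
  split_ifs with h <;> simp [h]

lemma filter_lt_card (hkd : k < d) :
    (Finset.univ.filter fun i : Fin d => ¬ k ≤ (i : ℕ)).card = k := by
  have : (Finset.univ.filter fun i : Fin d => ¬ k ≤ (i : ℕ)) =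
      Finset.Iio (⟨k, hkd⟩ : Fin d) := by
    ext i
    simp only [Finset.mem_filter, Finset.mem_univ, true_and, Finset.mem_Iio, Fin.lt_def]
    omega
  rw [this, Fin.card_Iio]

lemma ft_value (χ : AddChar F ℂ) (hχ : χ ≠ 1) (hkd : k < d) (x : Fin d → F) (hx : x ≠ 0) :
    fourierTransform χ (Finset.univ.filter fun x : Fin d → F =>
        ∀ i : Fin d, k ≤ (i : ℕ) → x i = 0)ᶜ x =
      if (∀ i : Fin d, (i : ℕ) < k → x i = 0) then
        -((Fintype.card F : ℂ) ^ k / (Fintype.card F : ℂ) ^ d) else 0 := by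
  have huniv : ∑ y : Fin d → F, χ (-(∑ i, x i * y i)) = 0 := by
    rw [← Fintype.piFinset_univ, sum_char_pi]
    obtain ⟨i, hi⟩ : ∃ i, x i ≠ 0 := by
      by_contra h; push_neg at h; exact hx (funext h)
    refine Finset.prod_eq_zero (Finset.mem_univ i) ?_
    rw [single_sum χ hχ, if_neg hi]
  have hS : ∑ y ∈ (Finset.univ.filter fun x : Fin d → F =>
        ∀ i : Fin d, k ≤ (i : ℕ) → x i = 0), χ (-(∑ i, x i * y i)) =
      if (∀ i : Fin d, (i : ℕ) < k → x i = 0) then (Fintype.card F : ℂ) ^ k else 0 := by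
    rw [S_eq, sum_char_pi]
    have hfac : ∀ i : Fin d,
        (∑ s ∈ (if k ≤ (i : ℕ) then ({0} : Finset F) else univ), χ (-(x i * s))) =
        if k ≤ (i : ℕ) then 1 else (if x i = 0 then (Fintype.card F : ℂ) else 0) := by
      intro i
      by_cases h : k ≤ (i : ℕ)
      · rw [if_pos h, if_pos h]; simp
      · rw [if_neg h, if_neg h]; exact single_sum χ hχ (x i)
    simp_rw [hfac]
    by_cases H : ∀ i : Fin d, (i : ℕ) < k → x i = 0
    · rw [if_pos H]
      have : ∀ i : Fin d, (if k ≤ (i : ℕ) then (1 : ℂ)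
          else (if x i = 0 then (Fintype.card F : ℂ) else 0)) =
          if k ≤ (i : ℕ) then 1 else (Fintype.card F : ℂ) := by
        intro i
        by_cases h : k ≤ (i : ℕ)
        · rw [if_pos h, if_pos h]
        · rw [if_neg h, if_neg h, if_pos (H i (by omega))]
      simp_rw [this]
      rw [Finset.prod_ite, Finset.prod_const_one, Finset.prod_const, one_mul,
        filter_lt_card hkd]
    · push_neg at H
      obtain ⟨i, hik, hxi⟩ := H
      rw [if_neg (by push_neg; exact ⟨i, hik, hxi⟩)]
      refine Finset.prod_eq_zero (Finset.mem_univ i) ?_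
      rw [if_neg (by omega), if_neg hxi]
  rw [fourierTransform]
  have hcompl : ∑ y ∈ (Finset.univ.filter fun x : Fin d → F =>
        ∀ i : Fin d, k ≤ (i : ℕ) → x i = 0)ᶜ, χ (-(∑ i, x i * y i)) =
      (∑ y : Fin d → F, χ (-(∑ i, x i * y i))) -
      ∑ y ∈ (Finset.univ.filter fun x : Fin d → F =>
        ∀ i : Fin d, k ≤ (i : ℕ) → x i = 0), χ (-(∑ i, x i * y i)) := by
    rw [eq_sub_iff_add_eq, Finset.sum_compl_add_sum]
  rw [hcompl, huniv, hS, zero_sub]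
  split_ifs with H
  · rw [div_eq_mul_inv, mul_comm ((Fintype.card F : ℂ) ^ k)]; ring
  · simp

lemma ft_abs (χ : AddChar F ℂ) (hχ : χ ≠ 1) (hkd : k < d) (x : Fin d → F) (hx : x ≠ 0) :
    ‖fourierTransform χ (Finset.univ.filter fun x : Fin d → F =>
        ∀ i : Fin d, k ≤ (i : ℕ) → x i = 0)ᶜ x‖ =
      if (∀ i : Fin d, (i : ℕ) < k → x i = 0) then
        (Fintype.card F : ℝ) ^ k / (Fintype.card F : ℝ) ^ d else 0 := by
  rw [ft_value χ hχ hkd x hx]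
  split_ifs with H
  · rw [norm_neg, norm_div, norm_pow, norm_pow, Complex.norm_natCast]
  · simp

lemma filter_ge_card (hkd : k < d) :
    (Finset.univ.filter fun i : Fin d => k ≤ (i : ℕ)).card = d - k := by
  have h := Finset.card_filter_add_card_filter_not
    (s := (Finset.univ : Finset (Fin d))) (p := fun i : Fin d => k ≤ (i : ℕ))
  rw [filter_lt_card hkd, Finset.card_univ, Fintype.card_fin] at h
  omega

lemma T_card (hkd : k < d) :
    (Finset.univ.filter fun x : Fin d → F => ∀ i : Fin d, (i : ℕ) < k → x i = 0).card =
      Fintype.card F ^ (d - k) := by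
  have hT : (Finset.univ.filter fun x : Fin d → F => ∀ i : Fin d, (i : ℕ) < k → x i = 0) =
      Fintype.piFinset (fun i : Fin d => if (i : ℕ) < k then ({0} : Finset F) else univ) := by
    ext y
    simp only [Finset.mem_filter, Finset.mem_univ, true_and, Fintype.mem_piFinset]
    apply forall_congr'
    intro i
    split_ifs with h <;> simp [h]
  rw [hT, Fintype.card_piFinset]
  have : ∀ i : Fin d, (if (i : ℕ) < k then ({0} : Finset F) else univ).card =
      if (i : ℕ) < k then 1 else Fintype.card F := by
    intro i; split_ifs <;> simp
  simp_rw [this]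
  rw [Finset.prod_ite, Finset.prod_const_one, Finset.prod_const, one_mul]
  congr 1
  have : (Finset.univ.filter fun i : Fin d => ¬ (i : ℕ) < k) =
      (Finset.univ.filter fun i : Fin d => k ≤ (i : ℕ)) := by
    apply Finset.filter_congr; intro i _; simp [not_lt]
  rw [this, filter_ge_card hkd]

end Aux

/-- For `E = F_q^d ∖ (F_q^k × {0}^{d-k})`, the exact formulas
`‖Ê‖_p^p = q^{-d}(q^{d-k} - 1)q^{(k-d)p}` for all `p ∈ [1,∞)`, and `‖Ê‖_∞ = q^{k-d}`. -/
theorem lp_complement_of_subspace {F : Type} [Field F] [Fintype F] [DecidableEq F]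
    (d k : ℕ) (hd : 2 ≤ d) (hk : 1 ≤ k) (hkd : k < d)
    (χ : AddChar F ℂ) (hχ : ∃ a, χ a ≠ 1) :
    (∀ p : ℝ, 1 ≤ p →
        lpNorm χ (Finset.univ.filter fun x : Fin d → F =>
            ∀ i : Fin d, k ≤ (i : ℕ) → x i = 0)ᶜ p ^ p =
          ((Fintype.card F : ℝ) ^ d)⁻¹ * ((Fintype.card F : ℝ) ^ (d - k) - 1) *
            (Fintype.card F : ℝ) ^ (((k : ℝ) - (d : ℝ)) * p)) ∧
      linfNorm χ (Finset.univ.filter fun x : Fin d → F =>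
          ∀ i : Fin d, k ≤ (i : ℕ) → x i = 0)ᶜ =
        (Fintype.card F : ℝ) ^ ((k : ℝ) - (d : ℝ)) := by
  have hχ1 : χ ≠ 1 := by
    obtain ⟨a, ha⟩ := hχ
    exact fun h => ha (by rw [h]; rfl)
  set q : ℝ := (Fintype.card F : ℝ) with hqdef
  have hq0 : (0 : ℝ) < q := by
    rw [hqdef]; exact_mod_cast (Fintype.card_pos : 0 < Fintype.card F)
  have hq1 : (1 : ℝ) ≤ q := by
    rw [hqdef]; exact Nat.one_le_cast.mpr Fintype.card_pos
  have hcd : q ^ k / q ^ d = q ^ ((k : ℝ) - (d : ℝ)) := by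
    rw [Real.rpow_sub hq0, Real.rpow_natCast, Real.rpow_natCast]
  have hc0 : (0 : ℝ) ≤ q ^ k / q ^ d := by positivity
  constructor
  · intro p hp
    have hp0 : p ≠ 0 := by linarith
    have hsum : ∑ x ∈ Finset.univ.filter (fun x : Fin d → F => x ≠ 0),
        ‖fourierTransform χ (Finset.univ.filter fun x : Fin d → F =>
          ∀ i : Fin d, k ≤ (i : ℕ) → x i = 0)ᶜ x‖ ^ p =
        (q ^ (d - k) - 1) * (q ^ k / q ^ d) ^ p := by
      have hterm : ∀ x ∈ Finset.univ.filter (fun x : Fin d → F => x ≠ 0),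
          ‖fourierTransform χ (Finset.univ.filter fun x : Fin d → F =>
            ∀ i : Fin d, k ≤ (i : ℕ) → x i = 0)ᶜ x‖ ^ p =
          if (∀ i : Fin d, (i : ℕ) < k → x i = 0) then (q ^ k / q ^ d) ^ p else 0 := by
        intro x hx
        rw [Finset.mem_filter] at hx
        rw [ft_abs χ hχ1 hkd x hx.2]
        split_ifs with H
        · rfl
        · exact Real.zero_rpow hp0
      rw [Finset.sum_congr rfl hterm, ← Finset.sum_filter, Finset.sum_const,
        Finset.filter_filter]
      have hset : (Finset.univ.filter fun x : Fin d → F =>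
          x ≠ 0 ∧ ∀ i : Fin d, (i : ℕ) < k → x i = 0) =
          (Finset.univ.filter fun x : Fin d → F =>
            ∀ i : Fin d, (i : ℕ) < k → x i = 0).erase 0 := by
        ext y
        simp only [Finset.mem_filter, Finset.mem_univ, true_and, Finset.mem_erase]
      rw [hset, Finset.card_erase_of_mem (by simp), T_card hkd,
        nsmul_eq_mul]
      congr 1
      have h1 : 1 ≤ Fintype.card F ^ (d - k) := Nat.one_le_iff_ne_zero.mpr
        (pow_ne_zero _ Fintype.card_ne_zero)
      push_cast [Nat.cast_sub h1]
      ring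
    rw [lpNorm, hsum]
    have hrp : (q ^ k / q ^ d) ^ p = q ^ (((k : ℝ) - (d : ℝ)) * p) := by
      rw [hcd, ← Real.rpow_mul hq0.le]
    have h1 : (0 : ℝ) ≤ q ^ (d - k) - 1 := by
      have : (1 : ℝ) ≤ q ^ (d - k) := one_le_pow₀ hq1
      linarith
    have hA : (0 : ℝ) ≤ (q ^ d)⁻¹ * ((q ^ (d - k) - 1) * (q ^ k / q ^ d) ^ p) := by
      have := Real.rpow_nonneg hc0 p
      positivity
    rw [← Real.rpow_mul hA, one_div_mul_cancel hp0, Real.rpow_one, hrp]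
    ring
  · have hset : {r : ℝ | ∃ x : Fin d → F, x ≠ 0 ∧
        r = ‖fourierTransform χ (Finset.univ.filter fun x : Fin d → F =>
          ∀ i : Fin d, k ≤ (i : ℕ) → x i = 0)ᶜ x‖} = {q ^ k / q ^ d, 0} := by
      ext r
      simp only [Set.mem_setOf_eq, Set.mem_insert_iff, Set.mem_singleton_iff]
      constructor
      · rintro ⟨x, hx, rfl⟩
        rw [ft_abs χ hχ1 hkd x hx]
        split_ifs with H
        · exact Or.inl rfl
        · exact Or.inr rfl
      · have h10 : (1 : F) ≠ 0 := one_ne_zero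
        rintro (rfl | rfl)
        · refine ⟨(Pi.single (⟨k, hkd⟩ : Fin d) (1 : F) : Fin d → F), ?_, ?_⟩
          · intro h
            have := congrFun h (⟨k, hkd⟩ : Fin d)
            rw [Pi.single_eq_same] at this
            exact h10 this
          · have hne : (Pi.single (⟨k, hkd⟩ : Fin d) (1 : F) : Fin d → F) ≠ 0 := by
              intro h
              have := congrFun h (⟨k, hkd⟩ : Fin d)
              rw [Pi.single_eq_same] at this
              exact h10 this
            rw [ft_abs χ hχ1 hkd _ hne, if_pos]
            intro i hi
            exact Pi.single_eq_of_ne (by intro h; rw [h] at hi; simp at hi) 1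
        · have hd0 : (0 : ℕ) < d := by omega
          refine ⟨(Pi.single (⟨0, hd0⟩ : Fin d) (1 : F) : Fin d → F), ?_, ?_⟩
          · intro h
            have := congrFun h (⟨0, hd0⟩ : Fin d)
            rw [Pi.single_eq_same] at this
            exact h10 this
          · have hne : (Pi.single (⟨0, hd0⟩ : Fin d) (1 : F) : Fin d → F) ≠ 0 := by
              intro h
              have := congrFun h (⟨0, hd0⟩ : Fin d)
              rw [Pi.single_eq_same] at this
              exact h10 this
            rw [ft_abs χ hχ1 hkd _ hne, if_neg]
            push_neg
            refine ⟨⟨0, hd0⟩, by simp; omega, ?_⟩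
            rw [Pi.single_eq_same]
            exact h10
    rw [linfNorm, hset, csSup_pair, sup_eq_left.mpr hc0, hcd]
end

section
/- Let q be a prime power, d ≥ 1 an integer, E ⊆ F_q^d, and write E^c = F_q^d ∖ E for its complement. Then: (i) for every x ∈ F_q^d with x ≠ 0, Ê(x) = −(E^c)^∧(x); hence ‖Ê‖_∞ ≤ q^{−d} · #(E^c); and (ii) if E^c is nonempty and #(E^c) ≤ c·q^d for some real 0 < c < 1, then ‖Ê‖_∞ ≥ √(1−c) · q^{−d} · √(#(E^c)). (These are the quantitative bounds behind the statement that if #(E^c) ≲ q^δ then E is (∞,s)-Salem for all s < 1 − δ/d, and if #(E^c) ≳ q^γ then E is not (∞,s)-Salem for s > 1 − γ/(2d).) -/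
open Finset

section Aux

variable {F : Type} [Field F] [Fintype F] [DecidableEq F] {d : ℕ}

/-- The additive monoid hom `y ↦ -(x·y)`. -/
private def dotHom (x : Fin d → F) : (Fin d → F) →+ F where
  toFun y := -(∑ i, x i * y i)
  map_zero' := by simp
  map_add' y z := by
    simp only [Pi.add_apply, mul_add, Finset.sum_add_distrib]
    ring

private lemma sum_char_zero (χ : AddChar F ℂ) (hχ : ∃ a, χ a ≠ 1)
    {x : Fin d → F} (hx : x ≠ 0) :
    ∑ y : Fin d → F, χ (-(∑ i, x i * y i)) = 0 := by
  have h : (χ.compAddMonoidHom (dotHom x)) ≠ 0 := by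
    obtain ⟨a, ha⟩ := hχ
    obtain ⟨i, hi⟩ := Function.ne_iff.mp hx
    have hxi : x i ≠ 0 := by simpa using hi
    refine AddChar.ne_zero_iff.mpr ⟨(Pi.single i ((x i)⁻¹ * (-a)) : Fin d → F), ?_⟩
    have hsum : ∑ j, x j * (Pi.single i ((x i)⁻¹ * (-a)) : Fin d → F) j = -a := by
      rw [Finset.sum_eq_single i]
      · rw [Pi.single_eq_same]
        field_simp
      · intro j _ hj
        rw [Pi.single_eq_of_ne hj, mul_zero]
      · simp
    have : (χ.compAddMonoidHom (dotHom x)) ((Pi.single i ((x i)⁻¹ * (-a)) : Fin d → F)) = χ a := by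
      simp only [AddChar.compAddMonoidHom_apply, dotHom, AddMonoidHom.coe_mk,
        ZeroHom.coe_mk, hsum, neg_neg]
    rw [this]
    exact ha
  have h2 := AddChar.sum_eq_zero_iff_ne_zero.mpr h
  simpa only [AddChar.compAddMonoidHom_apply, dotHom, AddMonoidHom.coe_mk,
    ZeroHom.coe_mk] using h2

private lemma sum_char_zero' (χ : AddChar F ℂ) (hχ : ∃ a, χ a ≠ 1)
    {w : Fin d → F} (hw : w ≠ 0) :
    ∑ x : Fin d → F, χ (-(∑ i, x i * w i)) = 0 := by
  have h : ∀ x : Fin d → F, (∑ i, x i * w i) = ∑ i, w i * x i :=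
    fun x => Finset.sum_congr rfl fun i _ => mul_comm _ _
  simp_rw [h]
  exact sum_char_zero χ hχ hw

private lemma parseval (χ : AddChar F ℂ) (hχ : ∃ a, χ a ≠ 1) (S : Finset (Fin d → F)) :
    ∑ x : Fin d → F, (‖∑ y ∈ S, χ (-(∑ i, x i * y i))‖) ^ 2
      = (Fintype.card F : ℝ) ^ d * S.card := by
  have conj_sum : ∀ x : Fin d → F,
      (starRingEnd ℂ) (∑ y ∈ S, χ (-(∑ i, x i * y i)))
        = ∑ z ∈ S, χ (∑ i, x i * z i) := by
    intro x
    rw [map_sum]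
    refine Finset.sum_congr rfl fun z _ => ?_
    rw [← AddChar.map_neg_eq_conj, neg_neg]
  have harg : ∀ x y z : Fin d → F,
      -(∑ i, x i * y i) + (∑ i, x i * z i) = -(∑ i, x i * (y i - z i)) := by
    intro x y z
    simp only [mul_sub, Finset.sum_sub_distrib, neg_sub]
    ring
  have inner : ∀ y z : Fin d → F,
      ∑ x : Fin d → F, χ (-(∑ i, x i * (y i - z i)))
        = if y = z then ((Fintype.card F : ℂ) ^ d) else 0 := by
    intro y z
    by_cases h : y = z
    · simp [h, Finset.card_univ]
    · rw [if_neg h]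
      have hw : (fun i => y i - z i) ≠ 0 := by
        intro h0
        apply h
        funext i
        have := congrFun h0 i
        simpa [sub_eq_zero] using this
      exact sum_char_zero' χ hχ hw
  have key : ∑ x : Fin d → F,
      (∑ y ∈ S, χ (-(∑ i, x i * y i))) *
        (starRingEnd ℂ) (∑ y ∈ S, χ (-(∑ i, x i * y i)))
      = ((Fintype.card F : ℂ) ^ d) * S.card := by
    calc ∑ x : Fin d → F,
        (∑ y ∈ S, χ (-(∑ i, x i * y i))) *
          (starRingEnd ℂ) (∑ y ∈ S, χ (-(∑ i, x i * y i)))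
        = ∑ x : Fin d → F, ∑ y ∈ S, ∑ z ∈ S, χ (-(∑ i, x i * (y i - z i))) := by
          refine Finset.sum_congr rfl fun x _ => ?_
          rw [conj_sum, Finset.sum_mul_sum]
          refine Finset.sum_congr rfl fun y _ => Finset.sum_congr rfl fun z _ => ?_
          rw [← AddChar.map_add_eq_mul, harg]
      _ = ∑ y ∈ S, ∑ z ∈ S, ∑ x : Fin d → F, χ (-(∑ i, x i * (y i - z i))) := by
          rw [Finset.sum_comm]
          refine Finset.sum_congr rfl fun y _ => ?_
          rw [Finset.sum_comm]
      _ = ∑ y ∈ S, ∑ z ∈ S, (if y = z then ((Fintype.card F : ℂ) ^ d) else 0) := by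
          refine Finset.sum_congr rfl fun y _ => Finset.sum_congr rfl fun z _ => ?_
          exact inner y z
      _ = ∑ y ∈ S, ((Fintype.card F : ℂ) ^ d) := by
          refine Finset.sum_congr rfl fun y hy => ?_
          rw [Finset.sum_ite_eq S y (fun _ => ((Fintype.card F : ℂ) ^ d)), if_pos hy]
      _ = ((Fintype.card F : ℂ) ^ d) * S.card := by
          rw [Finset.sum_const, nsmul_eq_mul, mul_comm]
  have habs : ∀ z : ℂ, ((‖z‖ : ℂ)) ^ 2 = z * (starRingEnd ℂ) z := by
    intro z
    rw [Complex.mul_conj]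
    norm_cast
    rw [Complex.sq_norm]
  have hcast : ((∑ x : Fin d → F,
        (‖∑ y ∈ S, χ (-(∑ i, x i * y i))‖) ^ 2 : ℝ) : ℂ)
      = (((Fintype.card F : ℝ) ^ d * S.card : ℝ) : ℂ) := by
    push_cast
    simp_rw [habs]
    exact key
  exact_mod_cast hcast

end Aux

/-- (i) For `x ≠ 0` the Fourier transforms of `E` and of its complement `Eᶜ` are
negatives of each other, so `‖Ê‖_∞ ≤ q^{-d} #(Eᶜ)`; (ii) if moreover `Eᶜ` is nonempty
with `#(Eᶜ) ≤ c q^d` for some `0 < c < 1`, then `‖Ê‖_∞ ≥ √(1-c) q^{-d} √(#(Eᶜ))`. -/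
theorem linf_complement {F : Type} [Field F] [Fintype F] [DecidableEq F] {d : ℕ}
    (hd : 1 ≤ d) (χ : AddChar F ℂ) (hχ : ∃ a, χ a ≠ 1)
    (E : Finset (Fin d → F)) (c : ℝ) :
    (∀ x : Fin d → F, x ≠ 0 →
        fourierTransform χ E x = -fourierTransform χ Eᶜ x) ∧
      linfNorm χ E ≤ ((Fintype.card F : ℝ) ^ d)⁻¹ * (Eᶜ.card : ℝ) ∧
      (Eᶜ.Nonempty → 0 < c → c < 1 →
        (Eᶜ.card : ℝ) ≤ c * (Fintype.card F : ℝ) ^ d →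
        Real.sqrt (1 - c) * ((Fintype.card F : ℝ) ^ d)⁻¹ * Real.sqrt (Eᶜ.card : ℝ) ≤
          linfNorm χ E) := by
  classical
  set Q : ℝ := (Fintype.card F : ℝ) ^ d with hQdef
  have hcard_pos : 0 < Fintype.card F := Fintype.card_pos
  have hQpos : 0 < Q := by positivity
  -- part (i)
  have part1 : ∀ x : Fin d → F, x ≠ 0 →
      fourierTransform χ E x = -fourierTransform χ Eᶜ x := by
    intro x hx
    have h := sum_char_zero χ hχ hx
    rw [← Finset.sum_add_sum_compl E (fun y => χ (-(∑ i, x i * y i)))] at h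
    unfold fourierTransform
    rw [← mul_neg]
    congr 1
    exact eq_neg_of_add_eq_zero_left h
  -- |F̂S(x)| = Q⁻¹ |∑ ...|
  have habsFT : ∀ (S : Finset (Fin d → F)) (x : Fin d → F),
      ‖fourierTransform χ S x‖
        = Q⁻¹ * ‖∑ y ∈ S, χ (-(∑ i, x i * y i))‖ := by
    intro S x
    unfold fourierTransform
    rw [norm_mul, norm_inv, norm_pow, Complex.norm_natCast]
  -- pointwise bound
  have hbound : ∀ x : Fin d → F,
      ‖fourierTransform χ Eᶜ x‖ ≤ Q⁻¹ * (Eᶜ.card : ℝ) := by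
    intro x
    rw [habsFT]
    refine mul_le_mul_of_nonneg_left ?_ (inv_nonneg.mpr hQpos.le)
    calc ‖∑ y ∈ Eᶜ, χ (-(∑ i, x i * y i))‖
        ≤ ∑ y ∈ Eᶜ, ‖χ (-(∑ i, x i * y i))‖ := norm_sum_le _ _
      _ = ∑ y ∈ Eᶜ, 1 := by
          refine Finset.sum_congr rfl fun y _ => ?_
          rw [AddChar.norm_apply]
      _ = (Eᶜ.card : ℝ) := by simp
  -- a nonzero frequency
  have hx0 : (Pi.single (⟨0, hd⟩ : Fin d) (1 : F) : Fin d → F) ≠ 0 := by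
    intro h0
    have := congrFun h0 ⟨0, hd⟩
    rw [Pi.single_eq_same] at this
    exact one_ne_zero this
  have hA_ne : {r : ℝ | ∃ x : Fin d → F, x ≠ 0 ∧
      r = ‖fourierTransform χ E x‖}.Nonempty :=
    ⟨_, _, hx0, rfl⟩
  have hmem_bound : ∀ r ∈ {r : ℝ | ∃ x : Fin d → F, x ≠ 0 ∧
      r = ‖fourierTransform χ E x‖}, r ≤ Q⁻¹ * (Eᶜ.card : ℝ) := by
    rintro r ⟨x, hx, rfl⟩
    rw [part1 x hx, norm_neg]
    exact hbound x
  have hbdd : BddAbove {r : ℝ | ∃ x : Fin d → F, x ≠ 0 ∧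
      r = ‖fourierTransform χ E x‖} :=
    ⟨Q⁻¹ * (Eᶜ.card : ℝ), hmem_bound⟩
  refine ⟨part1, csSup_le hA_ne hmem_bound, ?_⟩
  -- part (ii)
  intro hne hc0 hc1 hcard
  set N : ℝ := (Eᶜ.card : ℝ) with hNdef
  have hNpos : 0 < N := by rw [hNdef]; exact_mod_cast Finset.card_pos.mpr hne
  -- Parseval split
  have hT0 : ‖∑ y ∈ Eᶜ, χ (-(∑ i, (0 : Fin d → F) i * y i))‖ = N := by
    simp [Complex.norm_natCast, hNdef]
  have hsplit : (∑ x ∈ Finset.univ.filter (fun x : Fin d → F => x ≠ 0),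
        (‖∑ y ∈ Eᶜ, χ (-(∑ i, x i * y i))‖) ^ 2)
      = Q * N - N ^ 2 := by
    have h1 : (∑ x ∈ Finset.univ.filter (fun x : Fin d → F => x ≠ 0),
          (‖∑ y ∈ Eᶜ, χ (-(∑ i, x i * y i))‖) ^ 2)
        + (‖∑ y ∈ Eᶜ, χ (-(∑ i, (0 : Fin d → F) i * y i))‖) ^ 2
        = Q * N := by
      rw [Finset.filter_ne', Finset.sum_erase_add _ _ (Finset.mem_univ 0)]
      exact parseval χ hχ Eᶜ
    rw [hT0] at h1
    linarith
  -- lower bound on the filtered sum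
  have hsum_lb : (1 - c) * Q * N ≤ Q * N - N ^ 2 := by
    nlinarith [hNpos, hcard]
  have hscard : ((Finset.univ.filter (fun x : Fin d → F => x ≠ 0)).card : ℝ) ≤ Q := by
    have : (Finset.univ.filter (fun x : Fin d → F => x ≠ 0)).card
        ≤ Fintype.card (Fin d → F) := Finset.card_filter_le _ _
    have h2 : (Fintype.card (Fin d → F) : ℝ) = Q := by
      rw [hQdef]
      simp [Fintype.card_pi]
    calc ((Finset.univ.filter (fun x : Fin d → F => x ≠ 0)).card : ℝ)
        ≤ (Fintype.card (Fin d → F) : ℝ) := by exact_mod_cast this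
      _ = Q := h2
  have hs_ne : (Finset.univ.filter (fun x : Fin d → F => x ≠ 0)).Nonempty :=
    ⟨_, Finset.mem_filter.mpr ⟨Finset.mem_univ _, hx0⟩⟩
  have hconst_le : ∑ _x ∈ Finset.univ.filter (fun x : Fin d → F => x ≠ 0), (1 - c) * N
      ≤ ∑ x ∈ Finset.univ.filter (fun x : Fin d → F => x ≠ 0),
          (‖∑ y ∈ Eᶜ, χ (-(∑ i, x i * y i))‖) ^ 2 := by
    rw [Finset.sum_const, nsmul_eq_mul, hsplit]
    have h1c : 0 ≤ (1 - c) * N := mul_nonneg (by linarith) hNpos.le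
    calc ((Finset.univ.filter (fun x : Fin d → F => x ≠ 0)).card : ℝ) * ((1 - c) * N)
        ≤ Q * ((1 - c) * N) := mul_le_mul_of_nonneg_right hscard h1c
      _ = (1 - c) * Q * N := by ring
      _ ≤ Q * N - N ^ 2 := hsum_lb
  obtain ⟨x, hxmem, hxle⟩ := Finset.exists_le_of_sum_le hs_ne hconst_le
  have hxne : x ≠ 0 := (Finset.mem_filter.mp hxmem).2
  -- |F̂E(x)| ≥ √(1-c) Q⁻¹ √N
  have habs_ge : Real.sqrt (1 - c) * Q⁻¹ * Real.sqrt N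
      ≤ ‖fourierTransform χ E x‖ := by
    rw [part1 x hxne, norm_neg, habsFT]
    have h1 : Real.sqrt ((1 - c) * N)
        ≤ ‖∑ y ∈ Eᶜ, χ (-(∑ i, x i * y i))‖ := by
      have := Real.sqrt_le_sqrt hxle
      rwa [Real.sqrt_sq (norm_nonneg _)] at this
    rw [Real.sqrt_mul (by linarith)] at h1
    calc Real.sqrt (1 - c) * Q⁻¹ * Real.sqrt N
        = Q⁻¹ * (Real.sqrt (1 - c) * Real.sqrt N) := by ring
      _ ≤ Q⁻¹ * ‖∑ y ∈ Eᶜ, χ (-(∑ i, x i * y i))‖ :=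
          mul_le_mul_of_nonneg_left h1 (inv_nonneg.mpr hQpos.le)
  calc Real.sqrt (1 - c) * Q⁻¹ * Real.sqrt N
      ≤ ‖fourierTransform χ E x‖ := habs_ge
    _ ≤ linfNorm χ E := le_csSup hbdd ⟨x, hxne, rfl⟩
end

section
/- Let q be a prime power, d ≥ 2 an integer, and E ⊆ F_q^d nonempty with #E ≤ q/4. Then there exists t ∈ F_q with t ≠ 0 such that ∑_{m ∈ F_q^d : m₁² + ⋯ + m_d² = t} |Ê(m)|² ≥ (1/2) · q^{−d−1} · #E. (This spherical-average lower bound shows that a set E with #E ≲ q^β for some β < 1 cannot be a generalised Salem set, i.e. cannot satisfy ∑_{|m|²=t} |Ê(m)|² ≲_ε q^ε q^{−3d/2−1}(#E)² for all t ≠ 0.) -/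
open Finset

variable {F : Type} [Field F] [Fintype F] [DecidableEq F]

lemma myMapSum {ι : Type*} (χ : AddChar F ℂ) (s : Finset ι) (f : ι → F) :
    χ (∑ i ∈ s, f i) = ∏ i ∈ s, χ (f i) := by
  induction s using Finset.cons_induction with
  | empty => simp
  | cons a s ha ih => rw [Finset.sum_cons, Finset.prod_cons, AddChar.map_add_eq_mul, ih]

lemma sum_char_mul (χ : AddChar F ℂ) (hχ : χ ≠ 1) (b : F) :
    ∑ x : F, χ (x * b) = if b = 0 then (Fintype.card F : ℂ) else 0 := by
  split_ifs with h
  · simp [h, Finset.card_univ]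
  · have h1 : ∑ x : F, χ (x * b) = ∑ x : F, χ x :=
      Fintype.sum_equiv (Equiv.mulRight₀ b h) _ _ fun x => by simp
    rw [h1]
    exact AddChar.sum_eq_zero_iff_ne_zero.mpr (by rwa [Ne, ← AddChar.one_eq_zero])

set_option maxHeartbeats 1000000 in
lemma sum_char_dot {d : ℕ} (χ : AddChar F ℂ) (hχ : χ ≠ 1) (a : Fin d → F) :
    ∑ m : Fin d → F, χ (∑ i, m i * a i) =
      if a = 0 then (Fintype.card F : ℂ) ^ d else 0 := by
  calc ∑ m : Fin d → F, χ (∑ i, m i * a i)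
      = ∑ m ∈ Fintype.piFinset (fun _ : Fin d => (univ : Finset F)),
          ∏ i, χ (m i * a i) := by
        rw [Fintype.piFinset_univ]
        exact Finset.sum_congr rfl fun m _ => myMapSum χ _ _
    _ = ∏ i, ∑ x : F, χ (x * a i) :=
        Finset.sum_prod_piFinset (univ : Finset F) (fun i x => χ (x * a i))
    _ = ∏ i, (if a i = 0 then (Fintype.card F : ℂ) else 0) :=
        Finset.prod_congr rfl fun i _ => sum_char_mul χ hχ (a i)
    _ = if a = 0 then (Fintype.card F : ℂ) ^ d else 0 := by
        by_cases h : a = 0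
        · simp [h]
        · obtain ⟨i, hi⟩ := Function.ne_iff.mp h
          rw [if_neg h]
          exact Finset.prod_eq_zero (Finset.mem_univ i) (if_neg (by simpa using hi))

lemma plancherel {d : ℕ} (χ : AddChar F ℂ) (hχ : χ ≠ 1) (E : Finset (Fin d → F)) :
    ∑ m : Fin d → F, ‖fourierTransform χ E m‖ ^ 2 =
      ((Fintype.card F : ℝ) ^ d)⁻¹ * E.card := by
  have hq0 : (Fintype.card F : ℂ) ^ d ≠ 0 :=
    pow_ne_zero _ (Nat.cast_ne_zero.mpr Fintype.card_ne_zero)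
  apply Complex.ofReal_injective
  push_cast
  have step1 : ∀ m : Fin d → F,
      (‖fourierTransform χ E m‖ : ℂ) ^ 2 =
        ((Fintype.card F : ℂ) ^ d)⁻¹ * ((Fintype.card F : ℂ) ^ d)⁻¹ *
          ∑ y ∈ E, ∑ y' ∈ E, χ (∑ i, m i * (y' - y) i) := by
    intro m
    have h1 : (‖fourierTransform χ E m‖ : ℂ) ^ 2
        = fourierTransform χ E m * (starRingEnd ℂ) (fourierTransform χ E m) := by
      rw [← Complex.ofReal_pow, Complex.sq_norm, Complex.mul_conj]
    rw [h1]
    unfold fourierTransform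
    rw [map_mul, map_inv₀, map_pow, Complex.conj_natCast, map_sum]
    have hconj : ∀ y' : Fin d → F,
        (starRingEnd ℂ) (χ (-(∑ i, m i * y' i))) = χ (∑ i, m i * y' i) := fun y' => by
      rw [← AddChar.map_neg_eq_conj, neg_neg]
    simp only [hconj]
    have hexp : ∀ y y' : Fin d → F,
        χ (∑ i, m i * (y' - y) i) = χ (-(∑ i, m i * y i)) * χ (∑ i, m i * y' i) := by
      intro y y'
      rw [← AddChar.map_add_eq_mul]
      congr 1
      simp only [Pi.sub_apply, mul_sub]
      rw [Finset.sum_sub_distrib]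
      ring
    simp only [hexp]
    rw [← Finset.sum_mul_sum]
    ring
  calc ∑ m : Fin d → F, ((‖fourierTransform χ E m‖ : ℂ)) ^ 2
      = ∑ m : Fin d → F, (((Fintype.card F : ℂ) ^ d)⁻¹ * ((Fintype.card F : ℂ) ^ d)⁻¹ *
          ∑ y ∈ E, ∑ y' ∈ E, χ (∑ i, m i * (y' - y) i)) :=
        Finset.sum_congr rfl fun m _ => step1 m
    _ = ((Fintype.card F : ℂ) ^ d)⁻¹ * ((Fintype.card F : ℂ) ^ d)⁻¹ *
          ∑ y ∈ E, ∑ y' ∈ E, ∑ m : Fin d → F, χ (∑ i, m i * (y' - y) i) := by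
        rw [← Finset.mul_sum]
        congr 1
        rw [Finset.sum_comm]
        exact Finset.sum_congr rfl fun y _ => Finset.sum_comm
    _ = ((Fintype.card F : ℂ) ^ d)⁻¹ * ((Fintype.card F : ℂ) ^ d)⁻¹ *
          (E.card * (Fintype.card F : ℂ) ^ d) := by
        congr 1
        have hinner : ∀ y ∈ E, (∑ y' ∈ E, ∑ m : Fin d → F, χ (∑ i, m i * (y' - y) i))
            = (Fintype.card F : ℂ) ^ d := by
          intro y hy
          have h2 : ∀ y' : Fin d → F,
              (∑ m : Fin d → F, χ (∑ i, m i * (y' - y) i))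
                = if y' = y then (Fintype.card F : ℂ) ^ d else 0 := by
            intro y'
            rw [sum_char_dot χ hχ (y' - y)]
            simp only [sub_eq_zero]
          simp only [h2]
          simp [hy]
        rw [Finset.sum_congr rfl hinner]
        simp [mul_comm]
    _ = ((Fintype.card F : ℂ) ^ d)⁻¹ * (E.card : ℂ) := by
        field_simp

lemma ft_abs_le {d : ℕ} (χ : AddChar F ℂ) (E : Finset (Fin d → F)) (m : Fin d → F) :
    ‖fourierTransform χ E m‖ ≤ ((Fintype.card F : ℝ) ^ d)⁻¹ * E.card := by
  unfold fourierTransform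
  rw [norm_mul, norm_inv, norm_pow, Complex.norm_natCast]
  refine mul_le_mul_of_nonneg_left ?_ (by positivity)
  calc ‖∑ y ∈ E, χ (-(∑ i, m i * y i))‖
      ≤ ∑ y ∈ E, ‖χ (-(∑ i, m i * y i))‖ := norm_sum_le _ _
    _ = E.card := by
        rw [Finset.sum_congr rfl fun y _ => ?_, Finset.sum_const, nsmul_eq_mul, mul_one]
        rw [AddChar.norm_apply]

lemma count_sphere_zero {n : ℕ} :
    (univ.filter fun m : Fin (n+1) → F => ∑ i, m i * m i = 0).card
      ≤ 2 * Fintype.card F ^ n := by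
  have h := Finset.card_le_mul_card_image_of_maps_to
    (f := fun m : Fin (n+1) → F => Fin.tail m)
    (s := univ.filter fun m : Fin (n+1) → F => ∑ i, m i * m i = 0)
    (t := (univ : Finset (Fin n → F))) (fun a _ => mem_univ _) 2 ?_
  · calc _ ≤ 2 * (univ : Finset (Fin n → F)).card := h
      _ = 2 * Fintype.card F ^ n := by
          rw [Finset.card_univ, Fintype.card_fun]
          simp
  · intro v _
    set P := (univ.filter fun m : Fin (n+1) → F => ∑ i, m i * m i = 0).filter
      (fun m => Fin.tail m = v) with hPdef
    by_cases hP : P.Nonempty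
    · obtain ⟨m₀, hm₀⟩ := hP
      have hsub : P ⊆ {m₀, Fin.cons (-(m₀ 0)) v} := by
        intro m hm
        simp only [hPdef, mem_filter, mem_univ, true_and] at hm hm₀
        obtain ⟨hs, ht⟩ := hm
        obtain ⟨hs₀, ht₀⟩ := hm₀
        have htail : ∀ j : Fin n, m j.succ = m₀ j.succ := by
          intro j
          have h1 : m j.succ = v j := congrFun ht j
          have h2 : m₀ j.succ = v j := congrFun ht₀ j
          rw [h1, h2]
        have hhead : m 0 * m 0 = m₀ 0 * m₀ 0 := by
          have e1 := Fin.sum_univ_succ (fun i => m i * m i)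
          have e2 := Fin.sum_univ_succ (fun i => m₀ i * m₀ i)
          rw [hs] at e1
          rw [hs₀] at e2
          have e3 : ∑ i : Fin n, m i.succ * m i.succ = ∑ i : Fin n, m₀ i.succ * m₀ i.succ :=
            Finset.sum_congr rfl fun i _ => by rw [htail i]
          linear_combination e2 - e1 - e3
        rcases mul_self_eq_mul_self_iff.mp hhead with h0 | h0
        · have : m = m₀ := funext fun i => Fin.cases h0 (fun j => htail j) i
          simp [this]
        · have : m = Fin.cons (-(m₀ 0)) v := funext fun i => by
            refine Fin.cases ?_ (fun j => ?_) i
            · simpa using h0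
            · rw [Fin.cons_succ]
              exact congrFun ht j
          simp [this]
      calc P.card ≤ ({m₀, Fin.cons (-(m₀ 0)) v} : Finset (Fin (n+1) → F)).card :=
            Finset.card_le_card hsub
        _ ≤ 2 := Finset.card_insert_le _ _ |>.trans (by simp)
    · rw [Finset.not_nonempty_iff_eq_empty] at hP
      simp [← hPdef, hP]


/-- Spherical-average lower bound: if `E ⊆ F_q^d` (`d ≥ 2`) is nonempty with
`#E ≤ q/4`, then some sphere `{|m|² = t}`, `t ≠ 0`, carries at least
`(1/2) q^{-d-1} #E` of the squared Fourier mass of `E`. -/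
theorem spherical_lower_bound {F : Type} [Field F] [Fintype F] [DecidableEq F]
    {d : ℕ} (hd : 2 ≤ d)
    (χ : AddChar F ℂ) (hχ : ∃ a, χ a ≠ 1)
    (E : Finset (Fin d → F)) (hE : E.Nonempty)
    (hcard : (E.card : ℝ) ≤ (Fintype.card F : ℝ) / 4) :
    ∃ t : F, t ≠ 0 ∧
      (1 / 2) * ((Fintype.card F : ℝ) ^ (d + 1))⁻¹ * (E.card : ℝ) ≤
        ∑ m ∈ Finset.univ.filter (fun m : Fin d → F => ∑ i, m i * m i = t),
          ‖fourierTransform χ E m‖ ^ 2 := by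

  obtain ⟨n, rfl⟩ : ∃ n, d = n + 1 := ⟨d - 1, by omega⟩
  obtain ⟨a, ha⟩ := hχ
  have hχ1 : χ ≠ 1 := AddChar.ne_one_iff.mpr ⟨a, ha⟩
  set q : ℝ := (Fintype.card F : ℝ) with hqdef
  have hq2 : (2 : ℝ) ≤ q := by
    have h : 2 ≤ Fintype.card F := Fintype.one_lt_card
    rw [hqdef]; exact_mod_cast h
  have hq0 : (0 : ℝ) < q := by linarith
  have hE1 : (1 : ℝ) ≤ E.card := by exact_mod_cast hE.card_pos
  set g : F → ℝ := fun t => ∑ m ∈ univ.filter (fun m : Fin (n+1) → F => ∑ i, m i * m i = t),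
    ‖fourierTransform χ E m‖ ^ 2 with hgdef
  have hgnonneg : ∀ t, 0 ≤ g t := fun t =>
    Finset.sum_nonneg fun m _ => by positivity
  have htotal : ∑ t : F, g t = (q ^ (n+1))⁻¹ * E.card := by
    rw [← plancherel χ hχ1 E]
    exact Finset.sum_fiberwise _ _ _
  -- bound on the zero sphere
  have hg0 : g 0 ≤ (1/2) * (q ^ (n+1))⁻¹ * E.card := by
    have h1 : g 0 ≤ (univ.filter fun m : Fin (n+1) → F => ∑ i, m i * m i = 0).card *
        ((q ^ (n+1))⁻¹ * E.card) ^ 2 := by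
      rw [hgdef]
      calc (∑ m ∈ univ.filter (fun m : Fin (n+1) → F => ∑ i, m i * m i = 0),
            ‖fourierTransform χ E m‖ ^ 2)
          ≤ ∑ _m ∈ univ.filter (fun m : Fin (n+1) → F => ∑ i, m i * m i = 0),
            ((q ^ (n+1))⁻¹ * E.card) ^ 2 := by
            refine Finset.sum_le_sum fun m _ => ?_
            have := ft_abs_le χ E m
            have habs : (0:ℝ) ≤ ‖fourierTransform χ E m‖ := by positivity
            nlinarith [this, habs]
        _ = _ := by rw [Finset.sum_const, nsmul_eq_mul]
    have h2 : ((univ.filter fun m : Fin (n+1) → F => ∑ i, m i * m i = 0).card : ℝ)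
        ≤ 2 * q ^ n := by
      have := count_sphere_zero (F := F) (n := n)
      calc ((univ.filter fun m : Fin (n+1) → F => ∑ i, m i * m i = 0).card : ℝ)
          ≤ ((2 * Fintype.card F ^ n : ℕ) : ℝ) := by exact_mod_cast this
        _ = 2 * q ^ n := by push_cast [hqdef]; ring
    have h3 : (0:ℝ) ≤ ((q ^ (n+1))⁻¹ * E.card) ^ 2 := by positivity
    calc g 0 ≤ (2 * q ^ n) * ((q ^ (n+1))⁻¹ * E.card) ^ 2 := by nlinarith [h1, h2, h3]
      _ ≤ (1/2) * (q ^ (n+1))⁻¹ * E.card := by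
          have hq0' : q ≠ 0 := ne_of_gt hq0
          have heq : (2:ℝ) * q ^ n * ((q ^ (n+1))⁻¹ * (E.card:ℝ))^2
              = (2 * E.card / q) * ((q ^ (n+1))⁻¹ * E.card) := by
            field_simp
            ring
          rw [heq]
          have h4 : 2 * (E.card:ℝ) / q ≤ 1/2 := by
            rw [div_le_iff₀ hq0]
            linarith
          calc (2 * (E.card:ℝ) / q) * ((q ^ (n+1))⁻¹ * E.card)
              ≤ (1/2) * ((q ^ (n+1))⁻¹ * E.card) :=
                mul_le_mul_of_nonneg_right h4 (by positivity)
            _ = (1/2) * (q ^ (n+1))⁻¹ * E.card := by ring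
  -- sum over nonzero t
  have hsplit : g 0 + ∑ t ∈ univ.filter (fun t : F => ¬ t = 0), g t = ∑ t : F, g t := by
    rw [← Finset.sum_filter_add_sum_filter_not univ (fun t : F => t = 0) g]
    congr 1
    rw [Finset.filter_eq' univ (0 : F)]
    simp
  have hrest : (1/2) * (q ^ (n+1))⁻¹ * E.card ≤ ∑ t ∈ univ.filter (fun t : F => ¬ t = 0), g t := by
    have := htotal
    nlinarith [hg0, hsplit, htotal]
  -- pigeonhole
  by_contra hcon
  push_neg at hcon
  set b : ℝ := 1 / 2 * (q ^ (n + 1 + 1))⁻¹ * E.card with hbdef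
  have hb0 : 0 ≤ b := by positivity
  have hlt : ∀ t ∈ univ.filter (fun t : F => ¬ t = 0), g t < b := by
    intro t ht
    simp only [mem_filter, mem_univ, true_and] at ht
    exact hcon t ht
  have hne : (univ.filter (fun t : F => ¬ t = 0)).Nonempty :=
    ⟨1, by simp [one_ne_zero]⟩
  have hsum_lt : ∑ t ∈ univ.filter (fun t : F => ¬ t = 0), g t <
      (univ.filter (fun t : F => ¬ t = 0)).card * b := by
    calc ∑ t ∈ univ.filter (fun t : F => ¬ t = 0), g t
        < ∑ _t ∈ univ.filter (fun t : F => ¬ t = 0), b :=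
          Finset.sum_lt_sum_of_nonempty hne hlt
      _ = _ := by rw [Finset.sum_const, nsmul_eq_mul]
  have hcardle : ((univ.filter (fun t : F => ¬ t = 0)).card : ℝ) ≤ q := by
    calc ((univ.filter (fun t : F => ¬ t = 0)).card : ℝ)
        ≤ ((univ : Finset F).card : ℝ) := by
          exact_mod_cast Finset.card_le_card (Finset.filter_subset _ _)
      _ = q := by rw [Finset.card_univ, hqdef]
  have hqb : q * b = (1/2) * (q ^ (n+1))⁻¹ * E.card := by
    rw [hbdef]
    have : q ^ (n + 1 + 1) = q ^ (n+1) * q := pow_succ q (n+1)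
    rw [this]
    field_simp
  have : (univ.filter (fun t : F => ¬ t = 0)).card * b ≤ q * b :=
    mul_le_mul_of_nonneg_right hcardle hb0
  linarith [hrest, hsum_lt, this, hqb.ge, hqb.le]
end

section
/- Let q be a prime power, d ≥ 1 an integer, and let E ⊆ F_q^d be a Sidon set. Then for every real p ∈ [1,∞), (1/2)·q^d·‖Ê‖_{2p}² − q^{−d}·#E ≤ ‖(E+E)^∧‖_p ≤ q^{−d}·#E + (1/2)·q^d·‖Ê‖_{2p}², where E + E = { x + y : x, y ∈ E } is the sumset and all Fourier transforms and norms are taken in F_q^d. -/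
open Finset

lemma aux_lp_le {ι : Type*} (X : Finset ι) (f g : ι → ℝ) (c w : ℝ) (hw : 0 ≤ w)
    (hwX : w * X.card ≤ 1) (hc : 0 ≤ c)
    (hf : ∀ x ∈ X, 0 ≤ f x) (hg : ∀ x ∈ X, 0 ≤ g x)
    (h : ∀ x ∈ X, f x ≤ g x + c) {p : ℝ} (hp : 1 ≤ p) :
    (w * ∑ x ∈ X, f x ^ p) ^ (1/p) ≤ (w * ∑ x ∈ X, g x ^ p) ^ (1/p) + c := by
  have hp0 : 0 < p := lt_of_lt_of_le one_pos hp
  set w' : ℝ := w ^ (1/p) with hw'def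
  have hw' : 0 ≤ w' := Real.rpow_nonneg hw _
  have hw'p : w' ^ p = w := by
    rw [hw'def, ← Real.rpow_mul hw, one_div, inv_mul_cancel₀ hp0.ne', Real.rpow_one]
  have key : ∀ (t : ι → ℝ), (∀ x ∈ X, 0 ≤ t x) →
      w * ∑ x ∈ X, t x ^ p = ∑ x ∈ X, (w' * t x) ^ p := by
    intro t ht
    rw [Finset.mul_sum]
    refine Finset.sum_congr rfl fun x hx => ?_
    rw [Real.mul_rpow hw' (ht x hx), hw'p]
  rw [key f hf, key g hg]
  have step1 : (∑ x ∈ X, (w' * f x) ^ p) ^ (1/p) ≤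
      (∑ x ∈ X, (w' * g x + w' * c) ^ p) ^ (1/p) := by
    refine Real.rpow_le_rpow (Finset.sum_nonneg fun x hx =>
      Real.rpow_nonneg (mul_nonneg hw' (hf x hx)) _) ?_ (by positivity)
    refine Finset.sum_le_sum fun x hx => ?_
    refine Real.rpow_le_rpow (mul_nonneg hw' (hf x hx)) ?_ hp0.le
    rw [← mul_add]
    exact mul_le_mul_of_nonneg_left (h x hx) hw'
  refine step1.trans ?_
  refine (Real.Lp_add_le_of_nonneg (s := X) (f := fun x => w' * g x) (g := fun _ => w' * c) hp
    (fun x hx => mul_nonneg hw' (hg x hx)) (fun x _ => mul_nonneg hw' hc)).trans ?_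
  gcongr ?_ + ?_
  · exact le_refl _
  · have : ∑ _x ∈ X, (w' * c) ^ p = X.card * (w * c ^ p) := by
      rw [Finset.sum_const, nsmul_eq_mul, Real.mul_rpow hw' hc, hw'p]
    rw [this]
    have h1 : (X.card : ℝ) * (w * c ^ p) = (w * X.card) * c ^ p := by ring
    rw [h1, Real.mul_rpow (by positivity) (by positivity),
      ← Real.rpow_mul hc, mul_one_div, div_self hp0.ne', Real.rpow_one]
    calc (w * X.card) ^ (1/p) * c ≤ 1 * c := by
          gcongr
          exact Real.rpow_le_one (by positivity) hwX (by positivity)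
      _ = c := one_mul c

/-- For a Sidon set `E ⊆ F_q^d` and any `p ∈ [1,∞)`:
`(1/2) q^d ‖Ê‖_{2p}² - q^{-d} #E ≤ ‖(E+E)^∧‖_p ≤ q^{-d} #E + (1/2) q^d ‖Ê‖_{2p}²`. -/
theorem sidon_sumset_lp {F : Type} [Field F] [Fintype F] [DecidableEq F] {d : ℕ}
    (hd : 1 ≤ d) (χ : AddChar F ℂ) (hχ : ∃ a, χ a ≠ 1)
    (E : Finset (Fin d → F))
    (hSidon : ∀ a ∈ E, ∀ b ∈ E, ∀ c ∈ E, ∀ e ∈ E,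
      a + b = c + e → (a = c ∧ b = e) ∨ (a = e ∧ b = c))
    (p : ℝ) (hp : 1 ≤ p) :
    (1 / 2) * (Fintype.card F : ℝ) ^ d * lpNorm χ E (2 * p) ^ 2 -
        ((Fintype.card F : ℝ) ^ d)⁻¹ * (E.card : ℝ) ≤
      lpNorm χ ((E ×ˢ E).image fun z : (Fin d → F) × (Fin d → F) => z.1 + z.2) p ∧
    lpNorm χ ((E ×ˢ E).image fun z : (Fin d → F) × (Fin d → F) => z.1 + z.2) p ≤
      ((Fintype.card F : ℝ) ^ d)⁻¹ * (E.card : ℝ) +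
        (1 / 2) * (Fintype.card F : ℝ) ^ d * lpNorm χ E (2 * p) ^ 2 := by
  classical
  have hp0 : 0 < p := lt_of_lt_of_le one_pos hp
  set S : Finset (Fin d → F) := (E ×ˢ E).image fun z : (Fin d → F) × (Fin d → F) => z.1 + z.2
    with hSdef
  set Nr : ℝ := (Fintype.card F : ℝ) ^ d with hNrdef
  have hcardF : (0 : ℝ) < (Fintype.card F : ℝ) := by exact_mod_cast Fintype.card_pos
  have hNrpos : 0 < Nr := by positivity
  set Nc : ℂ := (Fintype.card F : ℂ) ^ d with hNcdef
  have hNc0 : Nc ≠ 0 := by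
    simp only [hNcdef]
    exact pow_ne_zero _ (Nat.cast_ne_zero.mpr Fintype.card_ne_zero)
  have habsNc : ‖Nc‖ = Nr := by
    simp [hNcdef, hNrdef, norm_pow, Complex.norm_natCast]
  have habsNcInv : ‖Nc⁻¹‖ = Nr⁻¹ := by rw [norm_inv, habsNc]
  set r : (Fin d → F) → ℕ := fun y => ((E ×ˢ E).filter fun z => z.1 + z.2 = y).card with hrdef
  set D : Finset (Fin d → F) := S.filter (fun y => r y = 1) with hDdef
  -- fiber structure
  have hfiber : ∀ y ∈ S, ∃ u v, u ∈ E ∧ v ∈ E ∧ u + v = y ∧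
      ((E ×ˢ E).filter fun z => z.1 + z.2 = y) = {(u, v), (v, u)} := by
    intro y hy
    rw [hSdef, Finset.mem_image] at hy
    obtain ⟨z, hz, hzy⟩ := hy
    rw [Finset.mem_product] at hz
    refine ⟨z.1, z.2, hz.1, hz.2, hzy, ?_⟩
    ext w
    simp only [Finset.mem_filter, Finset.mem_product, Finset.mem_insert, Finset.mem_singleton]
    constructor
    · rintro ⟨⟨hw1, hw2⟩, hwy⟩
      rcases hSidon w.1 hw1 w.2 hw2 z.1 hz.1 z.2 hz.2 (by rw [hwy, hzy]) with h | h
      · left; exact Prod.ext h.1 h.2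
      · right; exact Prod.ext h.1 h.2
    · rintro (rfl | rfl)
      · exact ⟨⟨hz.1, hz.2⟩, hzy⟩
      · exact ⟨⟨hz.2, hz.1⟩, by rw [add_comm]; exact hzy⟩
  have hr12 : ∀ y ∈ S, r y = 1 ∨ r y = 2 := by
    intro y hy
    obtain ⟨u, v, hu, hv, huv, hfib⟩ := hfiber y hy
    rw [hrdef]
    simp only
    rw [hfib]
    by_cases huv' : u = v
    · left; subst huv'; simp
    · right
      rw [Finset.card_insert_of_notMem (by simp [Prod.ext_iff, huv', Ne.symm huv']),
        Finset.card_singleton]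
  have hDsub : D ⊆ E.image (fun a => a + a) := by
    intro y hy
    rw [hDdef, Finset.mem_filter] at hy
    obtain ⟨hyS, hy1⟩ := hy
    obtain ⟨u, v, hu, hv, huv, hfib⟩ := hfiber y hyS
    have huv' : u = v := by
      by_contra hne
      have : r y = 2 := by
        rw [hrdef]; simp only; rw [hfib,
          Finset.card_insert_of_notMem (by simp [Prod.ext_iff, hne, Ne.symm hne]),
          Finset.card_singleton]
      omega
    subst huv'
    exact Finset.mem_image.mpr ⟨u, hu, huv⟩
  have hDcard : (D.card : ℝ) ≤ (E.card : ℝ) := by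
    exact_mod_cast (Finset.card_le_card hDsub).trans (Finset.card_image_le)
  -- pointwise identity
  have hpoint : ∀ x : Fin d → F, fourierTransform χ S x =
      (1/2 : ℂ) * Nc * (fourierTransform χ E x) ^ 2 +
      (1/2 : ℂ) * Nc⁻¹ * ∑ y ∈ D, χ (-(∑ i, x i * y i)) := by
    intro x
    set f : (Fin d → F) → ℂ := fun y => χ (-(∑ i, x i * y i)) with hfdef
    have hmul : ∀ u v : Fin d → F, f u * f v = f (u + v) := by
      intro u v
      simp only [hfdef]
      rw [← AddChar.map_add_eq_mul]
      congr 1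
      have : ∑ i, x i * (u + v) i = (∑ i, x i * u i) + ∑ i, x i * v i := by
        rw [← Finset.sum_add_distrib]
        exact Finset.sum_congr rfl fun i _ => by simp [Pi.add_apply, mul_add]
      rw [this, neg_add]
    have hsq : (∑ u ∈ E, f u) ^ 2 = ∑ z ∈ E ×ˢ E, f (z.1 + z.2) := by
      rw [sq, Finset.sum_mul_sum, Finset.sum_product]
      exact Finset.sum_congr rfl fun u _ => Finset.sum_congr rfl fun v _ => hmul u v
    have hcomp : ∑ z ∈ E ×ˢ E, f (z.1 + z.2) = ∑ y ∈ S, (r y : ℂ) * f y := by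
      rw [Finset.sum_comp f (fun z : (Fin d → F) × (Fin d → F) => z.1 + z.2)]
      rw [hSdef]
      exact Finset.sum_congr rfl fun y _ => by rw [nsmul_eq_mul, hrdef]
    have hDalt : ∑ y ∈ S, ((if r y = 1 then f y else 0)) = ∑ y ∈ D, f y := by
      rw [hDdef, Finset.sum_filter]
    have hsplit : ∑ y ∈ S, (r y : ℂ) * f y = 2 * ∑ y ∈ S, f y - ∑ y ∈ D, f y := by
      rw [← hDalt, Finset.mul_sum, ← Finset.sum_sub_distrib]
      refine Finset.sum_congr rfl fun y hy => ?_
      rcases hr12 y hy with h | h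
      · rw [if_pos h, h]; push_cast; ring
      · rw [if_neg (by omega), h]; push_cast; ring
    have hesq : (∑ u ∈ E, f u) ^ 2 = 2 * ∑ y ∈ S, f y - ∑ y ∈ D, f y := by
      rw [hsq, hcomp, hsplit]
    show Nc⁻¹ * ∑ y ∈ S, f y = _
    have hre : (1/2 : ℂ) * Nc * (fourierTransform χ E x) ^ 2 =
        (1/2 : ℂ) * Nc⁻¹ * (∑ u ∈ E, f u) ^ 2 := by
      show (1/2 : ℂ) * Nc * (Nc⁻¹ * ∑ u ∈ E, f u) ^ 2 = _
      field_simp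
    rw [hre, hesq]
    ring
  -- absolute value bounds
  have habsχ : ∀ (T : Finset (Fin d → F)) (x : Fin d → F),
      ‖∑ y ∈ T, χ (-(∑ i, x i * y i))‖ ≤ (T.card : ℝ) := by
    intro T x
    simpa using norm_sum_le T (fun y => χ (-(∑ i, x i * y i)))
  set A : (Fin d → F) → ℝ := fun x => ‖fourierTransform χ S x‖ with hAdef
  set B : (Fin d → F) → ℝ := fun x => (1/2) * Nr * (‖fourierTransform χ E x‖) ^ 2
    with hBdef
  set c' : ℝ := (1/2) * (Nr⁻¹ * (E.card : ℝ)) with hc'def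
  have hc'nonneg : 0 ≤ c' := by positivity
  have hBabs : ∀ x, B x = ‖(1/2 : ℂ) * Nc * (fourierTransform χ E x) ^ 2‖ := by
    intro x
    rw [hBdef]
    simp only [norm_mul, norm_pow, habsNc]
    norm_num
  have herr : ∀ x : Fin d → F, ‖(1/2 : ℂ) * Nc⁻¹ * ∑ y ∈ D, χ (-(∑ i, x i * y i))‖ ≤ c' := by
    intro x
    rw [norm_mul, norm_mul, habsNcInv, hc'def]
    have h1 : ‖(1/2 : ℂ)‖ = 1/2 := by norm_num [norm_div]
    rw [h1]
    have := (habsχ D x).trans hDcard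
    calc (1/2) * Nr⁻¹ * ‖∑ y ∈ D, χ (-(∑ i, x i * y i))‖
        ≤ (1/2) * Nr⁻¹ * (E.card : ℝ) := by
          refine mul_le_mul_of_nonneg_left this (by positivity)
      _ = 1/2 * (Nr⁻¹ * (E.card : ℝ)) := by ring
  have hub : ∀ x, A x ≤ B x + c' := by
    intro x
    rw [hAdef]
    simp only
    rw [hpoint x]
    refine (norm_add_le _ _).trans ?_
    rw [← hBabs x]
    exact add_le_add_right (herr x) _
  have hlb : ∀ x, B x ≤ A x + c' := by
    intro x
    rw [hBabs x]
    have : (1/2 : ℂ) * Nc * (fourierTransform χ E x) ^ 2 =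
        fourierTransform χ S x - (1/2 : ℂ) * Nc⁻¹ * ∑ y ∈ D, χ (-(∑ i, x i * y i)) := by
      rw [hpoint x]; ring
    rw [this]
    have h2 := norm_sub_le (fourierTransform χ S x)
      ((1/2 : ℂ) * Nc⁻¹ * ∑ y ∈ D, χ (-(∑ i, x i * y i)))
    exact h2.trans (add_le_add_right (herr x) _)
  -- the Lp assembly
  have hpne : p ≠ 0 := hp0.ne'
  set X : Finset (Fin d → F) := Finset.univ.filter (fun x : Fin d → F => x ≠ 0) with hXdef
  have hXcard : (X.card : ℝ) ≤ Nr := by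
    have h1 : X.card ≤ Fintype.card (Fin d → F) := Finset.card_le_univ X
    have h2 : Fintype.card (Fin d → F) = Fintype.card F ^ d := by
      simp [Fintype.card_fun]
    rw [h2] at h1
    rw [hNrdef]
    exact_mod_cast h1
  have hwX : Nr⁻¹ * (X.card : ℝ) ≤ 1 := by
    calc Nr⁻¹ * (X.card : ℝ) ≤ Nr⁻¹ * Nr := by gcongr
      _ = 1 := inv_mul_cancel₀ hNrpos.ne'
  have hlpS : lpNorm χ S p = (Nr⁻¹ * ∑ x ∈ X, A x ^ p) ^ (1/p) := rfl
  have hAnn : ∀ x ∈ X, 0 ≤ A x := fun x _ => norm_nonneg _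
  have hBnn : ∀ x ∈ X, 0 ≤ B x := fun x _ => by
    rw [hBdef]; positivity
  set a : ℝ := Nr⁻¹ * ∑ x ∈ X, ((‖fourierTransform χ E x‖) ^ 2) ^ p with hadef
  have hann : 0 ≤ a := by
    rw [hadef]
    exact mul_nonneg (by positivity)
      (Finset.sum_nonneg fun x _ => Real.rpow_nonneg (by positivity) _)
  have e1 : lpNorm χ E (2*p) ^ 2 = a ^ (1/p) := by
    have estep : ∀ x : Fin d → F, ‖fourierTransform χ E x‖ ^ (2*p)
        = ((‖fourierTransform χ E x‖) ^ 2) ^ p := by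
      intro x
      rw [Real.rpow_mul (norm_nonneg _) 2 p]
      congr 1
      rw [show (2:ℝ) = ((2:ℕ):ℝ) by norm_num, Real.rpow_natCast]
    have hlpE : lpNorm χ E (2*p) = a ^ (1/(2*p)) := by
      rw [lpNorm, hadef]
      congr 2
      exact Finset.sum_congr rfl fun x _ => estep x
    rw [hlpE, ← Real.rpow_natCast (a ^ (1/(2*p))) 2, ← Real.rpow_mul hann]
    congr 1
    push_cast
    field_simp
  have e2 : Nr⁻¹ * ∑ x ∈ X, B x ^ p = ((1/2)*Nr) ^ p * a := by
    have hB' : ∀ x ∈ X, B x ^ p =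
        ((1/2)*Nr)^p * ((‖fourierTransform χ E x‖)^2)^p := by
      intro x _
      rw [hBdef]
      exact Real.mul_rpow (by positivity) (by positivity)
    rw [Finset.sum_congr rfl hB', ← Finset.mul_sum, hadef]
    ring
  have key2 : (Nr⁻¹ * ∑ x ∈ X, B x ^ p) ^ (1/p) = (1/2) * Nr * lpNorm χ E (2*p) ^ 2 := by
    rw [e2, e1, Real.mul_rpow (Real.rpow_nonneg (by positivity) _) hann,
      ← Real.rpow_mul (by positivity : (0:ℝ) ≤ (1/2)*Nr), mul_one_div, div_self hpne,
      Real.rpow_one]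
  have hcc : c' ≤ Nr⁻¹ * (E.card : ℝ) := by
    have hx : (0:ℝ) ≤ Nr⁻¹ * (E.card : ℝ) := by positivity
    rw [hc'def]; linarith
  have hw0 : (0:ℝ) ≤ Nr⁻¹ := by positivity
  constructor
  · have h := aux_lp_le X B A c' Nr⁻¹ hw0 hwX hc'nonneg hBnn hAnn (fun x _ => hlb x) hp
    rw [key2] at h
    rw [hlpS]
    linarith
  · have h := aux_lp_le X A B c' Nr⁻¹ hw0 hwX hc'nonneg hAnn hBnn (fun x _ => hub x) hp
    rw [key2] at h
    rw [hlpS]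
    linarith
end
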